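/- Key differentiation identity (Lemma 4.2): if f^♥, f^♠ solve f' = V(x,λ)f and g^♥, g^♠ solve g' = V(x,μ)g for the Dirac system, then f₁^♥ f₁^♠ g₂^♠ g₂^♥ − f₂^♠ f₂^♥ g₁^♥ g₁^♠ = (1/(i(μ−λ))) · d/dx [ ((f^♥)ᵀ J g^♥) · ((f^♠)ᵀ J g^♠) ], where J = [[0,1],[−1,0]]. -/

import Mathlib

open Complex Matrix ComplexConjugate

/-- The Dirac potential matrix `V(x,λ) = −(iλ/2)σ₃ + Y₀(x)`. -/
noncomputable def diracV (ψ : ℝ → ℂ) (x : ℝ) (l : ℂ) : Matrix (Fin 2) (Fin 2) ℂ :=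
  !![-(I * l / 2), conj (ψ x); ψ x, I * l / 2]

/-- `fᵀ J g = f₁ g₂ − f₂ g₁` with `J = [[0,1],[−1,0]]`. -/
def Jpair (f g : Fin 2 → ℂ) : ℂ := f 0 * g 1 - f 1 * g 0

theorem dirac_key_identity (ψ : ℝ → ℂ) (hψ : Continuous ψ) (l m : ℂ)
    (hlm : l ≠ m)
    (fh fs gh gs : ℝ → Fin 2 → ℂ)
    (hfh : ∀ x : ℝ, HasDerivAt fh (diracV ψ x l *ᵥ fh x) x)
    (hfs : ∀ x : ℝ, HasDerivAt fs (diracV ψ x l *ᵥ fs x) x)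
    (hgh : ∀ x : ℝ, HasDerivAt gh (diracV ψ x m *ᵥ gh x) x)
    (hgs : ∀ x : ℝ, HasDerivAt gs (diracV ψ x m *ᵥ gs x) x) :
    ∀ x : ℝ,
      HasDerivAt (fun t => Jpair (fh t) (gh t) * Jpair (fs t) (gs t))
        (I * (m - l) *
          (fh x 0 * fs x 0 * gs x 1 * gh x 1 -
            fs x 1 * fh x 1 * gh x 0 * gs x 0)) x := by
  intro x
  have Hfh := hasDerivAt_pi.mp (hfh x)
  have Hfs := hasDerivAt_pi.mp (hfs x)
  have Hgh := hasDerivAt_pi.mp (hgh x)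
  have Hgs := hasDerivAt_pi.mp (hgs x)
  have key := ((((Hfh 0).mul (Hgh 1)).sub ((Hfh 1).mul (Hgh 0))).mul
    (((Hfs 0).mul (Hgs 1)).sub ((Hfs 1).mul (Hgs 0))))
  convert key using 1
  · rfl
  · funext t; simp [Jpair]
  simp [diracV, Matrix.mulVec, dotProduct, Fin.sum_univ_two, Jpair]
  ring
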